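/- arXiv:1704.04010 — 6 statements merged into one kernel-verified Lean document; each statement's English description precedes it below -/
import Mathlib

section
/- Suppose $U : B \times B \to \mathbb{R}$ is zig-zag concave on a normed space $B$ and satisfies $U(x,y) \geq \|x\|^p - D^p \|y\|^p$ for all $x, y$, and $U(0,0) \leq 0$. Then for any finite sequence $z_1, \ldots, z_n \in B$ and any fixed signs $\varepsilon_1, \ldots, \varepsilon_n \in \{-1,+1\}$, taking expectation over independent uniform random signs $\sigma_1, \ldots, \sigma_n \in \{-1,+1\}$, one has $\mathbb{E}_{\sigma}\, U\big(\sum_{t=1}^n \sigma_t z_t, \sum_{t=1}^n \varepsilon_t \sigma_t z_t\big) \leq U(0,0) \leq 0$, and consequently $\mathbb{E}_{\sigma}\big\|\sum_{t=1}^n \sigma_t z_t\big\|^p \leq D^p\, \mathbb{E}_{\sigma}\big\|\sum_{t=1}^n \varepsilon_t \sigma_t z_t\big\|^p$. -/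
open Real

noncomputable def sgn (b : Bool) : ℝ := if b then 1 else -1

theorem stmt_3_key {B : Type*} [NormedAddCommGroup B] [NormedSpace ℝ B] (U : B → B → ℝ)
    (hzz : ∀ (x y : B) (ε : ℝ), (ε = 1 ∨ ε = -1) →
      ConcaveOn ℝ Set.univ (fun z : B => U (x + z) (y + ε • z))) :
    ∀ (n : ℕ) (z : Fin n → B) (ε : Fin n → ℝ), (∀ t, ε t = 1 ∨ ε t = -1) →
    ∀ x y : B,
    (∑ σ : Fin n → Bool, U (x + ∑ t, sgn (σ t) • z t) (y + ∑ t, (ε t * sgn (σ t)) • z t))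
      ≤ 2 ^ n * U x y := by
  intro n
  induction n with
  | zero => intro z ε hε x y; simp
  | succ n ih =>
    intro z ε hε x y
    have hsum : (∑ σ : Fin (n+1) → Bool,
        U (x + ∑ t, sgn (σ t) • z t) (y + ∑ t, (ε t * sgn (σ t)) • z t))
        = ∑ b : Bool, ∑ τ : Fin n → Bool,
          U ((x + sgn b • z 0) + ∑ t, sgn (τ t) • z t.succ)
            ((y + (ε 0 * sgn b) • z 0) + ∑ t, (ε t.succ * sgn (τ t)) • z t.succ) := by
      rw [← (Fin.insertNthEquiv (fun _ => Bool) 0).sum_comp, Fintype.sum_prod_type]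
      congr 1 with b
      congr 1 with τ
      simp [Fin.sum_univ_succ, Fin.consEquiv, Fin.insertNthEquiv, add_assoc,
        Fin.succAbove]
    rw [hsum]
    have h2 : ∀ b : Bool, (∑ τ : Fin n → Bool,
          U ((x + sgn b • z 0) + ∑ t, sgn (τ t) • z t.succ)
            ((y + (ε 0 * sgn b) • z 0) + ∑ t, (ε t.succ * sgn (τ t)) • z t.succ))
          ≤ 2 ^ n * U (x + sgn b • z 0) (y + (ε 0 * sgn b) • z 0) := by
      intro b
      exact ih (fun t => z t.succ) (fun t => ε t.succ) (fun t => hε t.succ) _ _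
    have hconc := hzz x y (ε 0) (hε 0)
    have hmid := hconc.2 (Set.mem_univ (z 0)) (Set.mem_univ (-(z 0)))
      (by norm_num : (0:ℝ) ≤ 1/2) (by norm_num : (0:ℝ) ≤ 1/2) (by norm_num)
    simp only [smul_neg, smul_smul] at hmid
    have hmid' : U (x + z 0) (y + ε 0 • z 0) + U (x + -(z 0)) (y + -(ε 0 • z 0))
        ≤ 2 * U x y := by
      simp only [add_neg_cancel, smul_zero, add_zero, smul_eq_mul, smul_neg] at hmid
      linarith [hmid]
    calc (∑ b : Bool, ∑ τ : Fin n → Bool,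
          U ((x + sgn b • z 0) + ∑ t, sgn (τ t) • z t.succ)
            ((y + (ε 0 * sgn b) • z 0) + ∑ t, (ε t.succ * sgn (τ t)) • z t.succ))
        ≤ ∑ b : Bool, 2 ^ n * U (x + sgn b • z 0) (y + (ε 0 * sgn b) • z 0) :=
          Finset.sum_le_sum (fun b _ => h2 b)
      _ ≤ 2 ^ (n+1) * U x y := by
          rw [Fintype.sum_bool]
          have e1 : sgn true = (1:ℝ) := rfl
          have e2 : sgn false = (-1:ℝ) := rfl
          rw [e1, e2]
          have : (ε 0 * 1) • z 0 = ε 0 • z 0 := by rw [mul_one]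
          rw [this, one_smul]
          have : (ε 0 * (-1)) • z 0 = -(ε 0 • z 0) := by
            rw [mul_neg_one, neg_smul]
          rw [this]
          have : (-1 : ℝ) • z 0 = -(z 0) := by rw [neg_smul, one_smul]
          rw [this]
          ring_nf
          nlinarith [hmid', pow_pos (by norm_num : (0:ℝ) < 2) n]



/-- If `U` is zig-zag concave on a normed space `B`, satisfies
`U(x,y) ≥ ‖x‖ᵖ - Dᵖ‖y‖ᵖ` and `U(0,0) ≤ 0`, then for any vectors `z₁,…,zₙ` and
fixed signs `ε₁,…,εₙ`, averaging over uniform random signs `σ`,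
`𝔼_σ U(∑ σₜ zₜ, ∑ εₜ σₜ zₜ) ≤ U(0,0) ≤ 0` and consequently
`𝔼_σ ‖∑ σₜ zₜ‖ᵖ ≤ Dᵖ 𝔼_σ ‖∑ εₜ σₜ zₜ‖ᵖ`. -/
theorem stmt_3 {B : Type*} [NormedAddCommGroup B] [NormedSpace ℝ B]
    (p D : ℝ) (hp : 1 < p) (hD : 0 < D) (U : B → B → ℝ)
    (hzz : ∀ (x y : B) (ε : ℝ), (ε = 1 ∨ ε = -1) →
      ConcaveOn ℝ Set.univ (fun z : B => U (x + z) (y + ε • z)))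
    (hmaj : ∀ x y : B, U x y ≥ ‖x‖ ^ p - D ^ p * ‖y‖ ^ p)
    (hzero : U 0 0 ≤ 0)
    (n : ℕ) (z : Fin n → B) (ε : Fin n → ℝ)
    (hε : ∀ t, ε t = 1 ∨ ε t = -1) :
    ((∑ σ : Fin n → Bool,
        U (∑ t, sgn (σ t) • z t) (∑ t, (ε t * sgn (σ t)) • z t)) / 2 ^ n
      ≤ U 0 0 ∧ U 0 0 ≤ 0) ∧
    (∑ σ : Fin n → Bool, ‖∑ t, sgn (σ t) • z t‖ ^ p) / 2 ^ n ≤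
      D ^ p * (∑ σ : Fin n → Bool, ‖∑ t, (ε t * sgn (σ t)) • z t‖ ^ p) / 2 ^ n := by
  have hkey := stmt_3_key U hzz n z ε hε 0 0
  simp only [zero_add] at hkey
  have h2n : (0:ℝ) < 2 ^ n := by positivity
  have part1 : (∑ σ : Fin n → Bool,
      U (∑ t, sgn (σ t) • z t) (∑ t, (ε t * sgn (σ t)) • z t)) / 2 ^ n ≤ U 0 0 := by
    rw [div_le_iff₀ h2n]
    linarith [hkey]
  refine ⟨⟨part1, hzero⟩, ?_⟩
  have hptw : (∑ σ : Fin n → Bool,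
      (‖∑ t, sgn (σ t) • z t‖ ^ p - D ^ p * ‖∑ t, (ε t * sgn (σ t)) • z t‖ ^ p))
      ≤ ∑ σ : Fin n → Bool,
        U (∑ t, sgn (σ t) • z t) (∑ t, (ε t * sgn (σ t)) • z t) :=
    Finset.sum_le_sum (fun σ _ => hmaj _ _)
  rw [Finset.sum_sub_distrib, ← Finset.mul_sum] at hptw
  have hU0 : (∑ σ : Fin n → Bool,
      U (∑ t, sgn (σ t) • z t) (∑ t, (ε t * sgn (σ t)) • z t)) ≤ 0 := by
    nlinarith [hkey, hzero, h2n]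
  rw [div_le_div_iff₀ h2n h2n]
  nlinarith [hptw, hU0, h2n]
end

section
/- Let $y_1, \ldots, y_n$ be fixed vectors in a normed space with $\max_t \|y_t\| \leq M$, and let $\varepsilon_1, \ldots, \varepsilon_n$ be independent Rademacher random variables. Then $\mathbb{E}_\varepsilon \sup_{1 \leq a \leq b \leq n} \big\| \sum_{t=a}^b \varepsilon_t y_t \big\| \leq 4\, \mathbb{E}_\varepsilon \big\| \sum_{t=1}^n \varepsilon_t y_t \big\| + 5 M \log n$. -/
open Finset Real MeasureTheory ENNReal


lemma layercake_discrete {Ω : Type*} [Fintype Ω] (f g : Ω → ℝ)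
    (hf : ∀ σ, 0 ≤ f σ) (hg : ∀ σ, 0 ≤ g σ)
    (h : ∀ t : ℝ, (Finset.univ.filter fun σ => t < f σ).card
        ≤ 2 * (Finset.univ.filter fun σ => t < g σ).card) :
    ∑ σ, f σ ≤ 2 * ∑ σ, g σ := by
  letI : MeasurableSpace Ω := ⊤
  haveI : MeasurableSingletonClass Ω := ⟨fun _ => trivial⟩
  have meas : ∀ (φ : Ω → ℝ) (t : ℝ),
      Measure.count {a : Ω | t < φ a} = ((Finset.univ.filter fun σ => t < φ σ).card : ℝ≥0∞) := by
    intro φ t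
    rw [Measure.count_apply_finite _ (Set.toFinite _)]
    congr 1
    simp [Set.Finite.toFinset]
  have key : ∀ φ : Ω → ℝ, (∀ σ, 0 ≤ φ σ) →
      ∫⁻ t in Set.Ioi (0:ℝ), Measure.count {a : Ω | t < φ a}
        = ENNReal.ofReal (∑ σ, φ σ) := by
    intro φ hφ
    rw [← lintegral_eq_lintegral_meas_lt Measure.count (Filter.Eventually.of_forall hφ)
      (Measurable.aemeasurable (measurable_of_countable _)),
      lintegral_count, tsum_fintype, ENNReal.ofReal_sum_of_nonneg (fun i _ => hφ i)]
  have hle : ENNReal.ofReal (∑ σ, f σ) ≤ 2 * ENNReal.ofReal (∑ σ, g σ) := by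
    rw [← key f hf, ← key g hg, ← lintegral_const_mul' _ _ (by norm_num)]
    apply lintegral_mono
    intro t
    simp only []
    rw [meas f t, meas g t]
    calc ((Finset.univ.filter fun σ => t < f σ).card : ℝ≥0∞)
        ≤ ((2 * (Finset.univ.filter fun σ => t < g σ).card : ℕ) : ℝ≥0∞) := by
          exact_mod_cast Nat.cast_le.mpr (h t)
      _ = 2 * ((Finset.univ.filter fun σ => t < g σ).card : ℝ≥0∞) := by push_cast; ring
  have h2 : (2 : ℝ≥0∞) * ENNReal.ofReal (∑ σ, g σ) = ENNReal.ofReal (2 * ∑ σ, g σ) := by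
    rw [ENNReal.ofReal_mul (by norm_num)]; norm_num
  rw [h2] at hle
  exact (ENNReal.ofReal_le_ofReal_iff (by have : (0:ℝ) ≤ ∑ σ, g σ := Finset.sum_nonneg (fun i _ => hg i); linarith)).mp hle

lemma sgn_not (b : Bool) : sgn (!b) = - sgn b := by cases b <;> simp [sgn]

section aux
variable {E : Type*} [NormedAddCommGroup E] [NormedSpace ℝ E] {n : ℕ} (y : Fin n → E)

/-- partial sum of the first `k` signed vectors -/
noncomputable def pSum (k : ℕ) (σ : Fin n → Bool) : E :=
  ∑ t ∈ Finset.univ.filter (fun t : Fin n => (t : ℕ) < k), sgn (σ t) • y t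

/-- flip all signs from position `k` on -/
def flipAfter (k : ℕ) (σ : Fin n → Bool) : Fin n → Bool :=
  fun t => if (t : ℕ) < k then σ t else !(σ t)

lemma flipAfter_invol (k : ℕ) (σ : Fin n → Bool) :
    flipAfter k (flipAfter k σ) = σ := by
  funext t; by_cases h : (t : ℕ) < k <;> simp [flipAfter, h]

lemma pSum_zero (σ : Fin n → Bool) : pSum y 0 σ = 0 := by
  simp [pSum]

lemma pSum_n (σ : Fin n → Bool) : pSum y n σ = ∑ t, sgn (σ t) • y t := by
  unfold pSum
  rw [Finset.filter_true_of_mem (fun t _ => t.isLt)]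

lemma pSum_flipAfter_prefix {j k : ℕ} (hjk : j ≤ k) (σ : Fin n → Bool) :
    pSum y j (flipAfter k σ) = pSum y j σ := by
  unfold pSum
  refine Finset.sum_congr rfl (fun t ht => ?_)
  rw [Finset.mem_filter] at ht
  have : (t : ℕ) < k := lt_of_lt_of_le ht.2 hjk
  simp [flipAfter, this]

lemma pSum_add_flipAfter (k : ℕ) (σ : Fin n → Bool) :
    pSum y n σ + pSum y n (flipAfter k σ) = pSum y k σ + pSum y k σ := by
  have h1 : ∀ τ : Fin n → Bool, pSum y n τ =
      pSum y k τ + ∑ t ∈ Finset.univ.filter (fun t : Fin n => ¬ ((t : ℕ) < k)),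
        sgn (τ t) • y t := by
    intro τ
    rw [pSum_n]
    rw [← Finset.sum_filter_add_sum_filter_not Finset.univ (fun t : Fin n => (t : ℕ) < k)
      (fun t => sgn (τ t) • y t)]
    rfl
  rw [h1 σ, h1 (flipAfter k σ), pSum_flipAfter_prefix y (le_refl k)]
  have h2 : ∑ t ∈ Finset.univ.filter (fun t : Fin n => ¬ ((t : ℕ) < k)),
      sgn (flipAfter k σ t) • y t
      = - ∑ t ∈ Finset.univ.filter (fun t : Fin n => ¬ ((t : ℕ) < k)),
        sgn (σ t) • y t := by
    rw [← Finset.sum_neg_distrib]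
    refine Finset.sum_congr rfl (fun t ht => ?_)
    rw [Finset.mem_filter] at ht
    simp [flipAfter, ht.2, sgn_not, neg_smul]
  rw [h2]
  abel


noncomputable def maxPS (σ : Fin n → Bool) : ℝ :=
  (Finset.range (n+1)).sup' Finset.nonempty_range_add_one (fun k => ‖pSum y k σ‖)

lemma le_maxPS {k : ℕ} (hk : k ≤ n) (σ : Fin n → Bool) :
    ‖pSum y k σ‖ ≤ maxPS y σ := by
  unfold maxPS
  exact Finset.le_sup' (fun k => ‖pSum y k σ‖) (Finset.mem_range.mpr (Nat.lt_succ_of_le hk))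

lemma maxPS_nonneg (σ : Fin n → Bool) : 0 ≤ maxPS y σ :=
  le_trans (norm_nonneg _) (le_maxPS y (Nat.zero_le n) σ)

lemma stepB (t : ℝ) :
    (Finset.univ.filter fun σ : Fin n → Bool => t < maxPS y σ).card
      ≤ 2 * (Finset.univ.filter fun σ : Fin n → Bool => t < ‖pSum y n σ‖).card := by
  classical
  set A := Finset.univ.filter fun σ : Fin n → Bool => t < maxPS y σ with hA
  set B := Finset.univ.filter fun σ : Fin n → Bool => t < ‖pSum y n σ‖ with hB
  set τ : (Fin n → Bool) → ℕ := fun σ =>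
    if h : ∃ k, t < ‖pSum y k σ‖ then Nat.find h else 0 with hτ
  have hτA : ∀ σ ∈ A, (t < ‖pSum y (τ σ) σ‖ ∧ ∀ j < τ σ, ¬ t < ‖pSum y j σ‖)
      ∧ τ σ ≤ n := by
    intro σ hσ
    rw [hA, Finset.mem_filter] at hσ
    obtain ⟨k0, hk0mem, hk0⟩ := Finset.exists_mem_eq_sup'
      (Finset.nonempty_range_add_one (n := n)) (fun k => ‖pSum y k σ‖)
    have hk0n : k0 ≤ n := Nat.lt_succ_iff.mp (Finset.mem_range.mp hk0mem)
    have hP : t < ‖pSum y k0 σ‖ := by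
      have := hσ.2; rw [maxPS, hk0] at this; exact this
    have hex : ∃ k, t < ‖pSum y k σ‖ := ⟨k0, hP⟩
    simp only [hτ, dif_pos hex]
    exact ⟨⟨Nat.find_spec hex, fun j hj => Nat.find_min hex hj⟩,
      le_trans (Nat.find_le hP) hk0n⟩
  have hAk_mem : ∀ k, ∀ σ, σ ∈ A.filter (fun σ => τ σ = k) →
      flipAfter k σ ∈ A.filter (fun σ => τ σ = k) := by
    intro k σ hσ
    rw [Finset.mem_filter] at hσ
    obtain ⟨hσA, hσk⟩ := hσ
    obtain ⟨⟨hP, hmin⟩, hkn⟩ := hτA σ hσA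
    rw [hσk] at hP hmin hkn
    set σ' := flipAfter k σ with hσ'
    have hpre : ∀ j ≤ k, pSum y j σ' = pSum y j σ := fun j hj =>
      pSum_flipAfter_prefix y hj σ
    have hP' : t < ‖pSum y k σ'‖ := by rw [hpre k le_rfl]; exact hP
    have hex' : ∃ j, t < ‖pSum y j σ'‖ := ⟨k, hP'⟩
    have hτσ' : τ σ' = k := by
      simp only [hτ, dif_pos hex']
      rw [Nat.find_eq_iff]
      exact ⟨hP', fun j hj => by rw [hpre j (le_of_lt hj)]; exact hmin j hj⟩
    have hA' : σ' ∈ A := by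
      rw [hA, Finset.mem_filter]
      exact ⟨Finset.mem_univ _, lt_of_lt_of_le hP' (le_maxPS y hkn σ')⟩
    rw [Finset.mem_filter]
    exact ⟨hA', hτσ'⟩
  have hor : ∀ k, ∀ σ, σ ∈ A.filter (fun σ => τ σ = k) →
      σ ∈ B ∨ flipAfter k σ ∈ B := by
    intro k σ hσ
    rw [Finset.mem_filter] at hσ
    obtain ⟨hσA, hσk⟩ := hσ
    obtain ⟨⟨hP, _⟩, _⟩ := hτA σ hσA
    rw [hσk] at hP
    by_contra hc
    push_neg at hc
    obtain ⟨h1, h2⟩ := hc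
    rw [hB, Finset.mem_filter] at h1 h2
    simp only [Finset.mem_univ, true_and, not_lt] at h1 h2
    have hsum := pSum_add_flipAfter y k σ
    have h3 : ‖pSum y k σ + pSum y k σ‖ = 2 * ‖pSum y k σ‖ := by
      rw [← two_smul ℝ (pSum y k σ), norm_smul]; simp
    have h4 : ‖pSum y n σ + pSum y n (flipAfter k σ)‖
        ≤ ‖pSum y n σ‖ + ‖pSum y n (flipAfter k σ)‖ := norm_add_le _ _
    rw [hsum, h3] at h4
    linarith
  have hfiber : ∀ k, (A.filter (fun σ => τ σ = k)).card
      ≤ 2 * ((A ∩ B).filter (fun σ => τ σ = k)).card := by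
    intro k
    set Ak := A.filter (fun σ => τ σ = k) with hAk
    set Ck := (A ∩ B).filter (fun σ => τ σ = k) with hCk
    have hsub : Ak ⊆ (Ak.filter (fun σ => σ ∈ B)) ∪
        (Ak.filter (fun σ => flipAfter k σ ∈ B)) := by
      intro σ hσ
      rcases hor k σ hσ with h | h
      · exact Finset.mem_union_left _ (Finset.mem_filter.mpr ⟨hσ, h⟩)
      · exact Finset.mem_union_right _ (Finset.mem_filter.mpr ⟨hσ, h⟩)
    have hc1 : (Ak.filter (fun σ => σ ∈ B)).card ≤ Ck.card := by
      apply Finset.card_le_card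
      intro σ hσ
      rw [Finset.mem_filter] at hσ
      have h1 := Finset.mem_filter.mp hσ.1
      rw [hCk, Finset.mem_filter]
      exact ⟨Finset.mem_inter.mpr ⟨h1.1, hσ.2⟩, h1.2⟩
    have hc2 : (Ak.filter (fun σ => flipAfter k σ ∈ B)).card ≤ Ck.card := by
      apply Finset.card_le_card_of_injOn (flipAfter k)
      · intro σ hσ
        rw [Finset.mem_coe, Finset.mem_filter] at hσ
        have hmem := hAk_mem k σ hσ.1
        have h1 := Finset.mem_filter.mp hmem
        rw [Finset.mem_coe, hCk, Finset.mem_filter]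
        exact ⟨Finset.mem_inter.mpr ⟨h1.1, hσ.2⟩, h1.2⟩
      · intro σ1 _ σ2 _ h
        have := congrArg (flipAfter k) h
        rwa [flipAfter_invol, flipAfter_invol] at this
    calc Ak.card ≤ ((Ak.filter (fun σ => σ ∈ B)) ∪
          (Ak.filter (fun σ => flipAfter k σ ∈ B))).card := Finset.card_le_card hsub
      _ ≤ (Ak.filter (fun σ => σ ∈ B)).card
          + (Ak.filter (fun σ => flipAfter k σ ∈ B)).card := Finset.card_union_le _ _
      _ ≤ Ck.card + Ck.card := add_le_add hc1 hc2
      _ = 2 * Ck.card := by ring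
  have hmapsA : ∀ σ ∈ A, τ σ ∈ Finset.range (n+1) := fun σ hσ =>
    Finset.mem_range.mpr (Nat.lt_succ_of_le (hτA σ hσ).2)
  have h1 : A.card = ∑ k ∈ Finset.range (n+1), (A.filter (fun σ => τ σ = k)).card :=
    Finset.card_eq_sum_card_fiberwise hmapsA
  have h2 : (A ∩ B).card
      = ∑ k ∈ Finset.range (n+1), ((A ∩ B).filter (fun σ => τ σ = k)).card :=
    Finset.card_eq_sum_card_fiberwise
      (fun σ hσ => hmapsA σ (Finset.mem_of_mem_inter_left hσ))
  calc A.card = ∑ k ∈ Finset.range (n+1), (A.filter (fun σ => τ σ = k)).card := h1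
    _ ≤ ∑ k ∈ Finset.range (n+1), 2 * ((A ∩ B).filter (fun σ => τ σ = k)).card :=
        Finset.sum_le_sum (fun k _ => hfiber k)
    _ = 2 * (A ∩ B).card := by rw [← Finset.mul_sum, ← h2]
    _ ≤ 2 * B.card := by
        have := Finset.card_le_card (Finset.inter_subset_right (s₁ := A) (s₂ := B))
        omega

lemma Icc_eq (a b : Fin n) :
    Finset.Icc a b = Finset.univ.filter (fun t : Fin n => (t : ℕ) < (b : ℕ) + 1)
      \ Finset.univ.filter (fun t : Fin n => (t : ℕ) < (a : ℕ)) := by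
  ext t
  simp only [Finset.mem_Icc, Finset.mem_sdiff, Finset.mem_filter, Finset.mem_univ,
    true_and, Fin.le_def]
  omega

lemma stepA (hn : 1 ≤ n) (σ : Fin n → Bool) :
    (⨆ a : Fin n, ⨆ b : Fin n, ‖∑ t ∈ Finset.Icc a b, sgn (σ t) • y t‖)
      ≤ 2 * maxPS y σ := by
  haveI : Nonempty (Fin n) := ⟨⟨0, hn⟩⟩
  refine ciSup_le (fun a => ciSup_le (fun b => ?_))
  rcases le_or_gt a b with hab | hab
  · have hsub : Finset.univ.filter (fun t : Fin n => (t : ℕ) < (a : ℕ))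
        ⊆ Finset.univ.filter (fun t : Fin n => (t : ℕ) < (b : ℕ) + 1) := by
      intro t ht
      simp only [Finset.mem_filter, Finset.mem_univ, true_and] at *
      have : (a : ℕ) ≤ (b : ℕ) := hab
      omega
    rw [Icc_eq, Finset.sum_sdiff_eq_sub hsub]
    calc ‖pSum y ((b:ℕ)+1) σ - pSum y (a:ℕ) σ‖
        ≤ ‖pSum y ((b:ℕ)+1) σ‖ + ‖pSum y (a:ℕ) σ‖ := norm_sub_le _ _
      _ ≤ maxPS y σ + maxPS y σ :=
          add_le_add (le_maxPS y b.isLt σ) (le_maxPS y (le_of_lt a.isLt) σ)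
      _ = 2 * maxPS y σ := by ring
  · rw [Finset.Icc_eq_empty (by exact fun h => absurd h (not_le.mpr hab))]
    simp only [Finset.sum_empty, norm_zero]
    have := maxPS_nonneg y σ
    linarith
end aux

/-- For fixed vectors `y₁,…,yₙ` in a normed space with `max_t ‖y_t‖ ≤ M`, and
independent Rademacher signs `ε`,
`𝔼 sup_{a ≤ b} ‖∑_{t=a}^b εₜ yₜ‖ ≤ 4 𝔼‖∑_{t=1}^n εₜ yₜ‖ + 5 M log n`. -/
theorem stmt_7 {E : Type*} [NormedAddCommGroup E] [NormedSpace ℝ E]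
    (n : ℕ) (hn : 1 ≤ n) (y : Fin n → E) (M : ℝ)
    (hM : ∀ t, ‖y t‖ ≤ M) :
    (∑ σ : Fin n → Bool,
        ⨆ a : Fin n, ⨆ b : Fin n, ‖∑ t ∈ Finset.Icc a b, sgn (σ t) • y t‖)
        / 2 ^ n ≤
      4 * ((∑ σ : Fin n → Bool, ‖∑ t, sgn (σ t) • y t‖) / 2 ^ n)
        + 5 * M * Real.log n := by
  have hM0 : 0 ≤ M := le_trans (norm_nonneg _) (hM ⟨0, hn⟩)
  have hlog : 0 ≤ Real.log n := Real.log_nonneg (by exact_mod_cast hn)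
  have h5 : 0 ≤ 5 * M * Real.log n := by positivity
  have key : (∑ σ : Fin n → Bool,
      ⨆ a : Fin n, ⨆ b : Fin n, ‖∑ t ∈ Finset.Icc a b, sgn (σ t) • y t‖)
      ≤ 4 * ∑ σ : Fin n → Bool, ‖∑ t, sgn (σ t) • y t‖ := by
    have hstep1 : (∑ σ : Fin n → Bool,
        ⨆ a : Fin n, ⨆ b : Fin n, ‖∑ t ∈ Finset.Icc a b, sgn (σ t) • y t‖)
        ≤ ∑ σ : Fin n → Bool, 2 * maxPS y σ :=
      Finset.sum_le_sum (fun σ _ => stepA y hn σ)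
    have hlayer : (∑ σ : Fin n → Bool, maxPS y σ)
        ≤ 2 * ∑ σ : Fin n → Bool, ‖pSum y n σ‖ :=
      layercake_discrete _ _ (maxPS_nonneg y) (fun σ => norm_nonneg _) (stepB y)
    have hGn : (∑ σ : Fin n → Bool, ‖pSum y n σ‖)
        = ∑ σ : Fin n → Bool, ‖∑ t, sgn (σ t) • y t‖ := by
      refine Finset.sum_congr rfl (fun σ _ => ?_)
      rw [pSum_n]
    rw [← Finset.mul_sum] at *
    calc (∑ σ : Fin n → Bool,
        ⨆ a : Fin n, ⨆ b : Fin n, ‖∑ t ∈ Finset.Icc a b, sgn (σ t) • y t‖)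
        ≤ 2 * ∑ σ : Fin n → Bool, maxPS y σ := hstep1
      _ ≤ 2 * (2 * ∑ σ : Fin n → Bool, ‖pSum y n σ‖) := by linarith
      _ = 4 * ∑ σ : Fin n → Bool, ‖∑ t, sgn (σ t) • y t‖ := by rw [hGn]; ring
  have h2n : (0:ℝ) < 2 ^ n := by positivity
  calc (∑ σ : Fin n → Bool,
        ⨆ a : Fin n, ⨆ b : Fin n, ‖∑ t ∈ Finset.Icc a b, sgn (σ t) • y t‖) / 2 ^ n
      ≤ (4 * ∑ σ : Fin n → Bool, ‖∑ t, sgn (σ t) • y t‖) / 2 ^ n := by gcongr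
    _ = 4 * ((∑ σ : Fin n → Bool, ‖∑ t, sgn (σ t) • y t‖) / 2 ^ n) := by ring
    _ ≤ 4 * ((∑ σ : Fin n → Bool, ‖∑ t, sgn (σ t) • y t‖) / 2 ^ n)
        + 5 * M * Real.log n := by linarith
end

section
/- Let $k \geq 4$ be an even integer and define $\tilde{U}(x,y) = x^k - C x^{k-2} y^2 - B y^k$ with $C = 2\binom{k}{2}$ and $B = \frac{1}{k-2}\big(2C\binom{k-2}{2}\big)^{k-2}\binom{k}{2}^{-1}$. Then $\tilde{U}$ is zig-zag concave on $\mathbb{R}\times\mathbb{R}$: for every $x, y \in \mathbb{R}$, $\varepsilon \in \{-1,+1\}$, and $h \in \mathbb{R}$, the function $G(t) = \tilde{U}(x + ht, y + \varepsilon h t)$ satisfies $G''(0) \leq 0$ (and $G$ is concave). -/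
private lemma young_aux (n : ℕ) (u v : ℝ) (hu : 0 ≤ u) (hv : 0 ≤ v) :
    ((n:ℝ)+1) * (u * v^n) ≤ u^(n+1) + n * v^(n+1) := by
  induction n with
  | zero => simp
  | succ n ih =>
    have h1 : 0 ≤ (u - v) * (u^(n+1) - v^(n+1)) := by
      rcases le_total u v with hc | hc
      · have := pow_le_pow_left₀ hu hc (n+1)
        nlinarith
      · have := pow_le_pow_left₀ hv hc (n+1)
        nlinarith
    have h2 := mul_le_mul_of_nonneg_right ih hv
    push_cast
    have key : u^(n+1+1) + ((n:ℝ)+1)*v^(n+1+1) - ((n:ℝ)+1+1)*(u*v^(n+1))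
        = ((u^(n+1) + (n:ℝ)*v^(n+1)) * v - ((n:ℝ)+1)*(u*v^n)*v)
          + (u-v)*(u^(n+1)-v^(n+1)) := by ring
    linarith [h2, h1, key.ge, key.le]

private lemma coeff_ineq (m : ℕ) :
    ((m:ℝ)+4)*((m:ℝ)+3)*((m:ℝ)+2) * (4*((m:ℝ)+1))^(m+2)
      ≤ 2*((m:ℝ)+1) * (((m:ℝ)+4)*((m:ℝ)+3)*(((m:ℝ)+2)*((m:ℝ)+1)))^(m+2) := by
  have hm : (0:ℝ) ≤ (m:ℝ) := Nat.cast_nonneg m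
  set Q : ℝ := ((m:ℝ)+4)*((m:ℝ)+3)*((m:ℝ)+2)/4 with hQdef
  have hQ : (6:ℝ) ≤ Q := by
    rw [hQdef]
    nlinarith [mul_nonneg hm hm, mul_nonneg (mul_nonneg hm hm) hm]
  have hQ0 : (0:ℝ) < Q := by linarith
  have hbase : ((m:ℝ)+4)*((m:ℝ)+3)*(((m:ℝ)+2)*((m:ℝ)+1)) = Q * (4*((m:ℝ)+1)) := by
    rw [hQdef]; ring
  rw [hbase, mul_pow Q]
  set P := (4*((m:ℝ)+1))^(m+2) with hPdef
  have hP : (0:ℝ) ≤ P := by rw [hPdef]; positivity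
  have hQQQ : Q^2 ≤ Q^(m+2) := pow_le_pow_right₀ (by linarith) (by omega)
  have h2 : 6*Q ≤ Q^2 := by nlinarith
  have hA : 6*Q*P ≤ Q^(m+2)*P :=
    le_trans (mul_le_mul_of_nonneg_right h2 hP) (mul_le_mul_of_nonneg_right hQQQ hP)
  have hB := mul_le_mul_of_nonneg_left hA (by linarith : (0:ℝ) ≤ 2*((m:ℝ)+1))
  have hL : ((m:ℝ)+4)*((m:ℝ)+3)*((m:ℝ)+2) = 4*Q := by rw [hQdef]; ring
  rw [hL]
  nlinarith [hB, mul_nonneg (mul_nonneg hQ0.le hP) hm, mul_nonneg hQ0.le hP]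

private lemma key_ineq (m : ℕ) (hme : Even m) (ε X Y : ℝ) (hε : ε = 1 ∨ ε = -1) :
    ((m:ℝ)+4)*((m:ℝ)+3)*X^(m+2)
      - ((m:ℝ)+4)*((m:ℝ)+3) * ( ((m:ℝ)+2)*((m:ℝ)+1)*(X^m*Y^2)
          + 4*ε*((m:ℝ)+2)*(X^(m+1)*Y) + 2*X^(m+2) )
      - ((1/((m:ℝ)+2)) * ((((m:ℝ)+4)*((m:ℝ)+3)*(((m:ℝ)+2)*((m:ℝ)+1)))^(m+2))
          * (((m:ℝ)+4)*((m:ℝ)+3)/2)⁻¹) * (((m:ℝ)+4)*((m:ℝ)+3)) * Y^(m+2) ≤ 0 := by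
  have hm : (0:ℝ) ≤ (m:ℝ) := Nat.cast_nonneg m
  set C : ℝ := ((m:ℝ)+4)*((m:ℝ)+3) with hCdef
  set D : ℝ := ((m:ℝ)+4)*((m:ℝ)+3)*(((m:ℝ)+2)*((m:ℝ)+1)) with hDdef
  have hC0 : (0:ℝ) < C := by rw [hCdef]; nlinarith
  have hBC : (1/((m:ℝ)+2)) * D^(m+2) * (C/2)⁻¹ * C = 2 * D^(m+2) / ((m:ℝ)+2) := by
    have hne : C ≠ 0 := ne_of_gt hC0
    have hne2 : ((m:ℝ)+2) ≠ 0 := by positivity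
    field_simp
  rw [hBC]
  have hEm2 : Even (m+2) := hme.add even_two
  have hXm2 : |X|^(m+2) = X^(m+2) := hEm2.pow_abs X
  have hYm2 : |Y|^(m+2) = Y^(m+2) := hEm2.pow_abs Y
  have hy := young_aux (m+1) (4*((m:ℝ)+1)*|Y|) |X| (by positivity) (abs_nonneg X)
  simp only [show m+1+1 = m+2 from rfl] at hy
  push_cast at hy
  have hy2 := mul_le_mul_of_nonneg_left hy
      (mul_nonneg hC0.le (by positivity : (0:ℝ) ≤ (m:ℝ)+2))
  have hco := mul_le_mul_of_nonneg_right (coeff_ineq m)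
      (hEm2.pow_nonneg Y)
  rw [← hCdef, ← hDdef] at hco
  have hcross : -(ε*(X^(m+1)*Y)) ≤ |X|^(m+1)*|Y| := by
    have h1 : |X|^(m+1)*|Y| = |X^(m+1)*Y| := by rw [abs_mul, abs_pow]
    rcases hε with h | h <;> rw [h, h1]
    · simpa using neg_le_abs (X^(m+1)*Y)
    · simpa using le_abs_self (X^(m+1)*Y)
  have hcross2 := mul_le_mul_of_nonneg_left hcross
      (mul_nonneg (mul_nonneg (mul_nonneg (by norm_num : (0:ℝ) ≤ 4) hC0.le)
        (by positivity : (0:ℝ) ≤ (m:ℝ)+1)) (by positivity : (0:ℝ) ≤ ((m:ℝ)+2)^2))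
  rw [mul_pow (4*((m:ℝ)+1)) |Y|, hYm2, hXm2] at hy2
  have hXY2 : (0:ℝ) ≤ C*(((m:ℝ)+1)^2*((m:ℝ)+2)^2)*(X^m*Y^2) :=
    mul_nonneg (mul_nonneg hC0.le (by positivity))
      (mul_nonneg (hme.pow_nonneg X) (sq_nonneg Y))
  rw [sub_nonpos, div_mul_eq_mul_div, le_div_iff₀ (by positivity : (0:ℝ) < (m:ℝ)+2),
    ← mul_le_mul_iff_right₀ (by positivity : (0:ℝ) < (m:ℝ)+1)]
  nlinarith [hy2, hco, hcross2, hXY2]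

private lemma hasDeriv1 (x y ε h C B : ℝ) (m : ℕ) (t : ℝ) :
    HasDerivAt (fun s : ℝ => (x+h*s)^(m+4) - C*((x+h*s)^(m+2)*(y+ε*h*s)^2) - B*(y+ε*h*s)^(m+4))
      (h*((m:ℝ)+4) * (x+h*t)^(m+3)
        - C*(((m:ℝ)+2)*h * ((x+h*t)^(m+1)*(y+ε*h*t)^2) + 2*ε*h * ((x+h*t)^(m+2)*(y+ε*h*t)))
        - B*(ε*h*((m:ℝ)+4) * (y+ε*h*t)^(m+3))) t := by
  have hX : HasDerivAt (fun s : ℝ => x + h*s) h t := by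
    simpa using ((hasDerivAt_id t).const_mul h).const_add x
  have hY : HasDerivAt (fun s : ℝ => y + ε*h*s) (ε*h) t := by
    simpa using ((hasDerivAt_id t).const_mul (ε*h)).const_add y
  have h1 := hX.fun_pow (m+4)
  have h2 := (hX.fun_pow (m+2)).fun_mul (hY.fun_pow 2)
  have h3 := hY.fun_pow (m+4)
  have h4 := (h1.fun_sub (h2.const_mul C)).fun_sub (h3.const_mul B)
  refine h4.congr_deriv ?_
  simp only [show m+4-1 = m+3 from rfl, show m+2-1 = m+1 from rfl]
  push_cast
  ring

private lemma hasDeriv2 (x y ε h C B : ℝ) (m : ℕ) (t : ℝ) :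
    HasDerivAt (fun s : ℝ =>
        h*((m:ℝ)+4) * (x+h*s)^(m+3)
        - C*(((m:ℝ)+2)*h * ((x+h*s)^(m+1)*(y+ε*h*s)^2) + 2*ε*h * ((x+h*s)^(m+2)*(y+ε*h*s)))
        - B*(ε*h*((m:ℝ)+4) * (y+ε*h*s)^(m+3)))
      (h^2*((m:ℝ)+4)*((m:ℝ)+3)*(x+h*t)^(m+2)
        - C*( ((m:ℝ)+2)*((m:ℝ)+1)*h^2*((x+h*t)^m*(y+ε*h*t)^2)
              + 4*((m:ℝ)+2)*ε*h^2*((x+h*t)^(m+1)*(y+ε*h*t))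
              + 2*ε^2*h^2*(x+h*t)^(m+2) )
        - B*(ε^2*h^2*((m:ℝ)+4)*((m:ℝ)+3)*(y+ε*h*t)^(m+2))) t := by
  have hX : HasDerivAt (fun s : ℝ => x + h*s) h t := by
    simpa using ((hasDerivAt_id t).const_mul h).const_add x
  have hY : HasDerivAt (fun s : ℝ => y + ε*h*s) (ε*h) t := by
    simpa using ((hasDerivAt_id t).const_mul (ε*h)).const_add y
  have h1 := (hX.fun_pow (m+3)).const_mul (h*((m:ℝ)+4))
  have h2a := ((hX.fun_pow (m+1)).fun_mul (hY.fun_pow 2)).const_mul (((m:ℝ)+2)*h)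
  have h2b := ((hX.fun_pow (m+2)).fun_mul hY).const_mul (2*ε*h)
  have h2 := (h2a.fun_add h2b).const_mul C
  have h3 := (hY.fun_pow (m+3)).const_mul (ε*h*((m:ℝ)+4))
  have h4 := (h1.fun_sub h2).fun_sub (h3.const_mul B)
  refine h4.congr_deriv ?_
  simp only [show m+3-1 = m+2 from rfl, show m+1-1 = m from rfl, show m+2-1 = m+1 from rfl]
  push_cast
  ring

private lemma main_aux (m : ℕ) (hme : Even m) (x y ε h : ℝ) (hε : ε = 1 ∨ ε = -1) (C B : ℝ)
    (hC : C = ((m:ℝ)+4)*((m:ℝ)+3))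
    (hB : B = (1/((m:ℝ)+2)) * ((((m:ℝ)+4)*((m:ℝ)+3)*(((m:ℝ)+2)*((m:ℝ)+1)))^(m+2))
        * (((m:ℝ)+4)*((m:ℝ)+3)/2)⁻¹) :
    (∀ t : ℝ, deriv (deriv (fun s : ℝ =>
        (x+h*s)^(m+4) - C*((x+h*s)^(m+2)*(y+ε*h*s)^2) - B*(y+ε*h*s)^(m+4))) t ≤ 0)
    ∧ ConcaveOn ℝ Set.univ (fun s : ℝ =>
        (x+h*s)^(m+4) - C*((x+h*s)^(m+2)*(y+ε*h*s)^2) - B*(y+ε*h*s)^(m+4)) := by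
  set f : ℝ → ℝ := fun s : ℝ =>
      (x+h*s)^(m+4) - C*((x+h*s)^(m+2)*(y+ε*h*s)^2) - B*(y+ε*h*s)^(m+4) with hf
  have hd1 : deriv f = fun t : ℝ =>
      h*((m:ℝ)+4) * (x+h*t)^(m+3)
        - C*(((m:ℝ)+2)*h * ((x+h*t)^(m+1)*(y+ε*h*t)^2) + 2*ε*h * ((x+h*t)^(m+2)*(y+ε*h*t)))
        - B*(ε*h*((m:ℝ)+4) * (y+ε*h*t)^(m+3)) :=
    funext fun t => (hasDeriv1 x y ε h C B m t).deriv
  have hε2 : ε^2 = 1 := by rcases hε with h' | h' <;> rw [h'] <;> norm_num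
  have hdd : ∀ t : ℝ, deriv (deriv f) t =
      h^2*((m:ℝ)+4)*((m:ℝ)+3)*(x+h*t)^(m+2)
        - C*( ((m:ℝ)+2)*((m:ℝ)+1)*h^2*((x+h*t)^m*(y+ε*h*t)^2)
              + 4*((m:ℝ)+2)*ε*h^2*((x+h*t)^(m+1)*(y+ε*h*t))
              + 2*ε^2*h^2*(x+h*t)^(m+2) )
        - B*(ε^2*h^2*((m:ℝ)+4)*((m:ℝ)+3)*(y+ε*h*t)^(m+2)) := by
    intro t
    rw [hd1]
    exact (hasDeriv2 x y ε h C B m t).deriv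
  have hnonpos : ∀ t : ℝ, deriv (deriv f) t ≤ 0 := by
    intro t
    rw [hdd t]
    have hkey := key_ineq m hme ε (x+h*t) (y+ε*h*t) hε
    have heq : h^2*((m:ℝ)+4)*((m:ℝ)+3)*(x+h*t)^(m+2)
        - C*( ((m:ℝ)+2)*((m:ℝ)+1)*h^2*((x+h*t)^m*(y+ε*h*t)^2)
              + 4*((m:ℝ)+2)*ε*h^2*((x+h*t)^(m+1)*(y+ε*h*t))
              + 2*ε^2*h^2*(x+h*t)^(m+2) )
        - B*(ε^2*h^2*((m:ℝ)+4)*((m:ℝ)+3)*(y+ε*h*t)^(m+2))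
        = h^2 * (((m:ℝ)+4)*((m:ℝ)+3)*(x+h*t)^(m+2)
          - ((m:ℝ)+4)*((m:ℝ)+3) * ( ((m:ℝ)+2)*((m:ℝ)+1)*((x+h*t)^m*(y+ε*h*t)^2)
              + 4*ε*((m:ℝ)+2)*((x+h*t)^(m+1)*(y+ε*h*t)) + 2*(x+h*t)^(m+2) )
          - ((1/((m:ℝ)+2)) * ((((m:ℝ)+4)*((m:ℝ)+3)*(((m:ℝ)+2)*((m:ℝ)+1)))^(m+2))
              * (((m:ℝ)+4)*((m:ℝ)+3)/2)⁻¹) * (((m:ℝ)+4)*((m:ℝ)+3)) * (y+ε*h*t)^(m+2)) := by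
      rw [hC, hB, hε2]; ring
    rw [heq]
    exact mul_nonpos_of_nonneg_of_nonpos (sq_nonneg h) hkey
  refine ⟨hnonpos, ?_⟩
  have hdiff1 : Differentiable ℝ f := fun t => (hasDeriv1 x y ε h C B m t).differentiableAt
  have hdiff2 : Differentiable ℝ (deriv f) := by
    rw [hd1]
    exact fun t => (hasDeriv2 x y ε h C B m t).differentiableAt
  exact concaveOn_univ_of_deriv2_nonpos hdiff1 hdiff2 hnonpos


/-- For even `k ≥ 4`, with `C = 2·C(k,2)` and
`B = (2C·C(k-2,2))^{k-2} / ((k-2)·C(k,2))`, the function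
`Ũ(x,y) = x^k - C x^{k-2} y² - B y^k` is zig-zag concave: along any zig-zag
line `G(t) = Ũ(x+ht, y+εht)` one has `G''(0) ≤ 0`, and `G` is concave. -/
theorem stmt_9 (k : ℕ) (hk : 4 ≤ k) (hke : Even k) :
    ∀ x y ε h : ℝ, (ε = 1 ∨ ε = -1) →
      (deriv (deriv (fun t : ℝ =>
          (x + h * t) ^ k
            - (2 * (Nat.choose k 2 : ℝ)) * (x + h * t) ^ (k - 2)
                * (y + ε * h * t) ^ 2
            - ((1 / ((k : ℝ) - 2))
                * (2 * (2 * (Nat.choose k 2 : ℝ)) * (Nat.choose (k - 2) 2 : ℝ))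
                  ^ (k - 2) * ((Nat.choose k 2 : ℝ))⁻¹)
                * (y + ε * h * t) ^ k)) 0 ≤ 0) ∧
      ConcaveOn ℝ Set.univ (fun t : ℝ =>
          (x + h * t) ^ k
            - (2 * (Nat.choose k 2 : ℝ)) * (x + h * t) ^ (k - 2)
                * (y + ε * h * t) ^ 2
            - ((1 / ((k : ℝ) - 2))
                * (2 * (2 * (Nat.choose k 2 : ℝ)) * (Nat.choose (k - 2) 2 : ℝ))
                  ^ (k - 2) * ((Nat.choose k 2 : ℝ))⁻¹)
                * (y + ε * h * t) ^ k) := by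
  obtain ⟨m, rfl⟩ : ∃ m, k = m + 4 := ⟨k - 4, by omega⟩
  have hme : Even m := (Nat.even_add.mp hke).mpr (by decide)
  intro x y ε h hε
  have hc1 : ((Nat.choose (m+4) 2 : ℕ) : ℝ) = ((m:ℝ)+4)*((m:ℝ)+3)/2 := by
    rw [Nat.cast_choose_two]; push_cast; ring
  have hc2 : ((Nat.choose (m+2) 2 : ℕ) : ℝ) = ((m:ℝ)+2)*((m:ℝ)+1)/2 := by
    rw [Nat.cast_choose_two]; push_cast; ring
  have hk2 : m + 4 - 2 = m + 2 := rfl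
  have hBeq : (1 / (((m+4 : ℕ) : ℝ) - 2))
        * (2 * (2 * (Nat.choose (m+4) 2 : ℝ)) * (Nat.choose (m+4-2) 2 : ℝ)) ^ (m+4-2)
        * ((Nat.choose (m+4) 2 : ℝ))⁻¹
      = (1/((m:ℝ)+2)) * ((((m:ℝ)+4)*((m:ℝ)+3)*(((m:ℝ)+2)*((m:ℝ)+1)))^(m+2))
        * (((m:ℝ)+4)*((m:ℝ)+3)/2)⁻¹ := by
    rw [hk2, hc1, hc2]
    have hb : 2 * (2 * (((m:ℝ)+4)*((m:ℝ)+3)/2)) * (((m:ℝ)+2)*((m:ℝ)+1)/2)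
        = ((m:ℝ)+4)*((m:ℝ)+3)*(((m:ℝ)+2)*((m:ℝ)+1)) := by ring
    rw [hb]
    push_cast
    ring_nf
  have hfun : (fun t : ℝ =>
      (x + h * t) ^ (m+4)
        - (2 * (Nat.choose (m+4) 2 : ℝ)) * (x + h * t) ^ (m+4-2) * (y + ε * h * t) ^ 2
        - ((1 / (((m+4:ℕ) : ℝ) - 2))
            * (2 * (2 * (Nat.choose (m+4) 2 : ℝ)) * (Nat.choose (m+4-2) 2 : ℝ)) ^ (m+4-2)
            * ((Nat.choose (m+4) 2 : ℝ))⁻¹) * (y + ε * h * t) ^ (m+4))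
      = (fun s : ℝ =>
        (x+h*s)^(m+4)
          - (((m:ℝ)+4)*((m:ℝ)+3))*((x+h*s)^(m+2)*(y+ε*h*s)^2)
          - ((1/((m:ℝ)+2)) * ((((m:ℝ)+4)*((m:ℝ)+3)*(((m:ℝ)+2)*((m:ℝ)+1)))^(m+2))
              * (((m:ℝ)+4)*((m:ℝ)+3)/2)⁻¹)*(y+ε*h*s)^(m+4)) := by
    funext s
    rw [hBeq, hk2, hc1]
    ring
  obtain ⟨h1, h2⟩ := main_aux m hme x y ε h hε
    (((m:ℝ)+4)*((m:ℝ)+3))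
    ((1/((m:ℝ)+2)) * ((((m:ℝ)+4)*((m:ℝ)+3)*(((m:ℝ)+2)*((m:ℝ)+1)))^(m+2))
        * (((m:ℝ)+4)*((m:ℝ)+3)/2)⁻¹) rfl rfl
  rw [hfun]
  exact ⟨h1 0, h2⟩
end

section
/- Let $u : B \times B \to \mathbb{R}$ be biconvex on a normed space $B$, with $u(x,y) \leq \|x+y\|$ whenever $\max\{\|x\|, \|y\|\} \geq 1$, $u(x,y) = u(-x,-y)$, and $u(x,y) \leq u(0,0) + \|x+y\|$ for all $x,y$, with $u(0,0) > 0$. Then the function $\mathbf{U}(x,y) = 1 - \frac{u(x+y,\, y-x)}{u(0,0)}$ is zig-zag concave, satisfies $\mathbf{U}(0,0) = 0$, and satisfies the weak-type minorization $\mathbf{U}(x,y) \geq \mathbf{1}\{\|x\| \geq 1\} - \frac{2}{u(0,0)}\|y\|$ for all $x, y \in B$. -/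
lemma aux_affine_cvx {B : Type*} [NormedAddCommGroup B] [NormedSpace ℝ B]
    (f : B → ℝ) (hf : ConvexOn ℝ Set.univ f) (a : B) (c : ℝ) :
    ConvexOn ℝ Set.univ (fun z => f (a + c • z)) := by
  have hg := hf.comp_affineMap
    ({ toFun := fun z => a + c • z,
       linear := c • (LinearMap.id : B →ₗ[ℝ] B),
       map_vadd' := by intro p v; simp [smul_add]; abel } : B →ᵃ[ℝ] B)
  exact hg

lemma aux_concave {B : Type*} [NormedAddCommGroup B] [NormedSpace ℝ B]
    (f : B → ℝ) (hf : ConvexOn ℝ Set.univ f) (a : B) (cc : ℝ) (c : ℝ) (hc : 0 < c) :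
    ConcaveOn ℝ Set.univ (fun z => 1 - f (a + cc • z) / c) := by
  have h1 := aux_affine_cvx f hf a cc
  have h2 : ConvexOn ℝ Set.univ (fun z => c⁻¹ * f (a + cc • z)) := by
    have := h1.smul (c := c⁻¹) (by positivity)
    simpa using this
  have h4 := h2.neg.add_const 1
  convert h4 using 2 with z
  · rfl
  · rfl
  simp only [Pi.add_apply, Pi.neg_apply]
  ring

/-- Burkholder's construction of a weak-type zig-zag concave function from a
biconvex `ζ`-type function `u`: if `u` is biconvex, `u(x,y) ≤ ‖x+y‖` whenever
`max(‖x‖,‖y‖) ≥ 1`, `u(x,y) = u(-x,-y)`, `u(x,y) ≤ u(0,0) + ‖x+y‖`, and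
`u(0,0) > 0`, then `𝐔(x,y) = 1 - u(x+y, y-x)/u(0,0)` is zig-zag concave,
vanishes at the origin, and satisfies
`𝐔(x,y) ≥ 1{‖x‖ ≥ 1} - (2/u(0,0))‖y‖`. -/
theorem stmt_12 {B : Type*} [NormedAddCommGroup B] [NormedSpace ℝ B]
    (u : B → B → ℝ)
    (hbi₁ : ∀ y, ConvexOn ℝ Set.univ (fun x => u x y))
    (hbi₂ : ∀ x, ConvexOn ℝ Set.univ (fun y => u x y))
    (hmaj : ∀ x y : B, 1 ≤ max ‖x‖ ‖y‖ → u x y ≤ ‖x + y‖)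
    (hsymm : ∀ x y : B, u x y = u (-x) (-y))
    (hup : ∀ x y : B, u x y ≤ u 0 0 + ‖x + y‖)
    (hpos : 0 < u 0 0) :
    (∀ (x y : B) (ε : ℝ), (ε = 1 ∨ ε = -1) →
      ConcaveOn ℝ Set.univ (fun z : B =>
        1 - u ((x + z) + (y + ε • z)) ((y + ε • z) - (x + z)) / u 0 0)) ∧
    (1 - u ((0 : B) + 0) ((0 : B) - 0) / u 0 0 = 0) ∧
    (∀ x y : B,
      1 - u (x + y) (y - x) / u 0 0 ≥
        (if 1 ≤ ‖x‖ then (1 : ℝ) else 0) - (2 / u 0 0) * ‖y‖) := by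
  refine ⟨?_, ?_, ?_⟩
  · rintro x y ε (rfl | rfl)
    · have := aux_concave (fun w => u w (y - x)) (hbi₁ (y - x)) (x + y) 2 (u 0 0) hpos
      convert this using 2 with z
      have harg1 : x + z + (y + (1 : ℝ) • z) = x + y + (2 : ℝ) • z := by
        simp [two_smul]; abel
      have harg2 : y + (1 : ℝ) • z - (x + z) = y - x := by
        simp only [one_smul]; abel
      rw [harg1, harg2]
    · have := aux_concave (fun w => u (x + y) w) (hbi₂ (x + y)) (y - x) (-2) (u 0 0) hpos
      convert this using 2 with z
      have harg1 : x + z + (y + (-1 : ℝ) • z) = x + y := by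
        simp only [neg_smul, one_smul]; abel
      have harg2 : y + (-1 : ℝ) • z - (x + z) = y - x + (-2 : ℝ) • z := by
        simp [two_smul]; abel
      rw [harg1, harg2]
  · simp [div_self hpos.ne']
  · intro x y
    have hkey : (2 / u 0 0) * ‖y‖ = 2 * ‖y‖ / u 0 0 := by ring
    by_cases hx : 1 ≤ ‖x‖
    · simp only [if_pos hx]
      have hmax : 1 ≤ max ‖x + y‖ ‖y - x‖ := by
        by_contra h
        push_neg at h
        have h1 : ‖x + y‖ < 1 := lt_of_le_of_lt (le_max_left _ _) h
        have h2 : ‖y - x‖ < 1 := lt_of_le_of_lt (le_max_right _ _) h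
        have h3 : ‖(2 : ℝ) • x‖ ≤ ‖x + y‖ + ‖y - x‖ := by
          have he : (2 : ℝ) • x = (x + y) - (y - x) := by
            simp [two_smul]; abel
          rw [he]; exact norm_sub_le _ _
        rw [norm_smul] at h3
        simp at h3
        linarith
      have hu : u (x + y) (y - x) ≤ ‖(x + y) + (y - x)‖ := hmaj _ _ hmax
      have harg : (x + y) + (y - x) = (2 : ℝ) • y := by simp [two_smul]; abel
      rw [harg, norm_smul] at hu
      simp only [Real.norm_ofNat] at hu
      have hdiv : u (x + y) (y - x) / u 0 0 ≤ 2 * ‖y‖ / u 0 0 := by gcongr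
      linarith
    · simp only [if_neg hx]
      have hu : u (x + y) (y - x) ≤ u 0 0 + ‖(x + y) + (y - x)‖ := hup _ _
      have harg : (x + y) + (y - x) = (2 : ℝ) • y := by simp [two_smul]; abel
      rw [harg, norm_smul] at hu
      simp only [Real.norm_ofNat] at hu
      have hdiv : u (x + y) (y - x) / u 0 0 ≤ (u 0 0 + 2 * ‖y‖) / u 0 0 := by gcongr
      rw [add_div, div_self hpos.ne'] at hdiv
      linarith
end

section
/- Let $\ell$ be one of the absolute loss, hinge loss, or linear loss, and let $\mathcal{F}$ be a class of functions $f : \mathcal{X} \to [-1,1]$. Suppose $\mathcal{B} : \mathcal{X}^n \to \mathbb{R}$ is such that there exists a prediction strategy $(\hat{y}_t)$ (where $\hat{y}_t$ may depend only on $x_{1:t}$ and $y_{1:t-1}$) guaranteeing $\sum_{t=1}^n \ell(\hat{y}_t, y_t) - \inf_{f\in\mathcal{F}}\sum_{t=1}^n \ell(f(x_t), y_t) \leq \mathcal{B}(x_{1:n})$ for all sequences. Then for every sequence $x_{1:n}$, the empirical Rademacher complexity satisfies $\hat{\mathfrak{R}}_{\mathcal{F}}(x_{1:n}) := \mathbb{E}_\varepsilon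 \sup_{f\in\mathcal{F}} \sum_{t=1}^n \varepsilon_t f(x_t) \leq \mathcal{B}(x_{1:n})$. -/
open Finset

/-- Sequence optimality of the empirical Rademacher complexity: for the
absolute, hinge, or linear loss and a class `F` of `[-1,1]`-valued functions,
any data-dependent bound `𝓑` achievable by some (causal, `[-1,1]`-valued)
prediction strategy dominates the empirical Rademacher complexity on every
sequence. -/
theorem stmt_13 {𝒳 : Type*} (n : ℕ) (F : Set (𝒳 → ℝ)) (hFne : F.Nonempty)
    (hFbdd : ∀ f ∈ F, ∀ x, f x ∈ Set.Icc (-1 : ℝ) 1)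
    (ℓ : ℝ → ℝ → ℝ)
    (hℓ : (∀ a b, ℓ a b = |a - b|) ∨ (∀ a b, ℓ a b = max 0 (1 - a * b)) ∨
      (∀ a b, ℓ a b = -(a * b)))
    (𝓑 : (Fin n → 𝒳) → ℝ)
    (hstrat : ∃ yhat : Fin n → (Fin n → 𝒳) → (Fin n → ℝ) → ℝ,
      (∀ (t : Fin n) (x x' : Fin n → 𝒳) (y y' : Fin n → ℝ),
        (∀ s, s ≤ t → x s = x' s) → (∀ s, s < t → y s = y' s) →
          yhat t x y = yhat t x' y') ∧
      (∀ t x y, yhat t x y ∈ Set.Icc (-1 : ℝ) 1) ∧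
      (∀ (x : Fin n → 𝒳) (y : Fin n → ℝ), (∀ t, y t = 1 ∨ y t = -1) →
        ∑ t, ℓ (yhat t x y) (y t) -
          ⨅ f : F, ∑ t, ℓ ((f : 𝒳 → ℝ) (x t)) (y t) ≤ 𝓑 x)) :
    ∀ x : Fin n → 𝒳,
      (∑ ε : Fin n → Bool, ⨆ f : F, ∑ t, sgn (ε t) * (f : 𝒳 → ℝ) (x t))
          / 2 ^ n ≤ 𝓑 x := by
  obtain ⟨yhat, hcausal, hbdd, hreg⟩ := hstrat
  obtain ⟨c, hc⟩ : ∃ c : ℝ, ∀ a ∈ Set.Icc (-1 : ℝ) 1, ∀ b : ℝ,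
      (b = 1 ∨ b = -1) → ℓ a b = c - a * b := by
    rcases hℓ with h | h | h
    · refine ⟨1, ?_⟩
      rintro a ⟨ha1, ha2⟩ b (rfl | rfl) <;> rw [h]
      · rw [abs_of_nonpos (by linarith)]; ring
      · rw [abs_of_nonneg (by linarith)]; ring
    · refine ⟨1, ?_⟩
      rintro a ⟨ha1, ha2⟩ b (rfl | rfl) <;> rw [h, max_eq_right (by nlinarith)]
    · exact ⟨0, fun a _ b _ => by rw [h]; ring⟩
  intro x
  haveI : Nonempty F := hFne.to_subtype
  set y : (Fin n → Bool) → Fin n → ℝ := fun ε s => sgn (ε s) with hy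
  have hy1 : ∀ ε t, y ε t = 1 ∨ y ε t = -1 := by
    intro ε t; by_cases h : ε t <;> simp [hy, sgn, h]
  have hconv : ∀ (ε : Fin n → Bool) (g : Fin n → ℝ),
      (∀ t, g t ∈ Set.Icc (-1 : ℝ) 1) →
      ∑ t, ℓ (g t) (y ε t) = (n : ℝ) * c - ∑ t, sgn (ε t) * g t := by
    intro ε g hg
    have h1 : ∀ t, ℓ (g t) (y ε t) = c - sgn (ε t) * g t := by
      intro t
      rw [hc _ (hg t) _ (hy1 ε t)]
      have : y ε t = sgn (ε t) := rfl
      rw [this]; ring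
    rw [Finset.sum_congr rfl fun t _ => h1 t, Finset.sum_sub_distrib]
    simp [Finset.card_univ, mul_comm]
  have key : ∀ ε : Fin n → Bool,
      (⨆ f : F, ∑ t, sgn (ε t) * (f : 𝒳 → ℝ) (x t)) ≤
        𝓑 x + ∑ t, sgn (ε t) * yhat t x (y ε) := by
    intro ε
    have hinf_ge : (∑ t, ℓ (yhat t x (y ε)) (y ε t)) - 𝓑 x ≤
        ⨅ f : F, ∑ t, ℓ ((f : 𝒳 → ℝ) (x t)) (y ε t) := by
      have := hreg x (y ε) (hy1 ε); linarith
    have hbb : BddBelow (Set.range fun f : F => ∑ t, ℓ ((f : 𝒳 → ℝ) (x t)) (y ε t)) := by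
      refine ⟨(n : ℝ) * (c - 1), ?_⟩
      rintro _ ⟨g, rfl⟩
      have hb : ∀ t : Fin n, c - 1 ≤ ℓ ((g : 𝒳 → ℝ) (x t)) (y ε t) := by
        intro t
        have hgm := hFbdd g g.2 (x t)
        rw [hc _ hgm _ (hy1 ε t)]
        rcases hy1 ε t with h | h <;> rw [h] <;> rcases hgm with ⟨h1, h2⟩ <;> nlinarith
      calc (n : ℝ) * (c - 1) = ∑ _t : Fin n, (c - 1) := by
            simp [Finset.card_univ, mul_comm]; ring
        _ ≤ _ := Finset.sum_le_sum fun t _ => hb t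
    apply ciSup_le
    intro f
    have h1 : (⨅ f : F, ∑ t, ℓ ((f : 𝒳 → ℝ) (x t)) (y ε t)) ≤
        ∑ t, ℓ ((f : 𝒳 → ℝ) (x t)) (y ε t) := ciInf_le hbb f
    have h2 := hconv ε (fun t => (f : 𝒳 → ℝ) (x t)) (fun t => hFbdd f f.2 (x t))
    have h3 := hconv ε (fun t => yhat t x (y ε)) (fun t => hbdd t x (y ε))
    linarith
  have hzero : ∑ ε : Fin n → Bool, ∑ t, sgn (ε t) * yhat t x (y ε) = 0 := by
    rw [Finset.sum_comm]
    refine Finset.sum_eq_zero fun t _ => ?_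
    have hinv : Function.Involutive
        (fun ε : Fin n → Bool => Function.update ε t (!(ε t))) := by
      intro ε; funext s
      rcases eq_or_ne s t with rfl | hs
      · simp
      · simp [Function.update_of_ne hs]
    have hflip := Equiv.sum_comp (Function.Involutive.toPerm _ hinv)
      (fun ε : Fin n → Bool => sgn (ε t) * yhat t x (y ε))
    have hpair : ∀ ε : Fin n → Bool,
        (fun ε : Fin n → Bool => sgn (ε t) * yhat t x (y ε)) ((Function.Involutive.toPerm _ hinv) ε)
          = -(sgn (ε t) * yhat t x (y ε)) := by
      intro ε
      have hy_eq : yhat t x (y (Function.update ε t (!(ε t)))) = yhat t x (y ε) := by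
        apply hcausal t x x _ _ (fun s _ => rfl)
        intro s hs
        have hst : s ≠ t := ne_of_lt hs
        simp [hy, Function.update_of_ne hst]
      have hsgn : sgn ((Function.update ε t (!(ε t))) t) = -sgn (ε t) := by
        by_cases h : ε t <;> simp [sgn, h]
      simp only [Function.Involutive.coe_toPerm]
      rw [hsgn, hy_eq]; ring
    have : ∑ ε : Fin n → Bool, sgn (ε t) * yhat t x (y ε)
        = -∑ ε : Fin n → Bool, sgn (ε t) * yhat t x (y ε) := by
      conv_lhs => rw [← hflip]
      rw [Finset.sum_congr rfl fun ε _ => hpair ε, Finset.sum_neg_distrib]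
    linarith
  have hsum : ∑ ε : Fin n → Bool, (⨆ f : F, ∑ t, sgn (ε t) * (f : 𝒳 → ℝ) (x t))
      ≤ (2 : ℝ) ^ n * 𝓑 x := by
    calc ∑ ε : Fin n → Bool, (⨆ f : F, ∑ t, sgn (ε t) * (f : 𝒳 → ℝ) (x t))
        ≤ ∑ ε : Fin n → Bool, (𝓑 x + ∑ t, sgn (ε t) * yhat t x (y ε)) :=
          Finset.sum_le_sum fun ε _ => key ε
      _ = (2 : ℝ) ^ n * 𝓑 x := by
          rw [Finset.sum_add_distrib, hzero, add_zero, Finset.sum_const,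
            Finset.card_univ]
          simp [mul_comm]
  rw [div_le_iff₀ (by positivity : (0 : ℝ) < 2 ^ n)]
  linarith
end

section
/- Let $K \subseteq \mathbb{R}^d$ be a symmetric convex body and suppose (John's theorem corollary) there exists a positive semidefinite matrix $\Xi$ with $\langle x, \Xi x\rangle \leq \sup_{f \in K^\star}|\langle f, x\rangle|^2 \leq d\, \langle x, \Xi x\rangle$ for all $x \in K$. Then for vectors $x_1, \ldots, x_n$ in the unit $\ell_\infty$ ball with $r = \dim \mathrm{span}(x_1,\ldots,x_n)$, applying this to $K = B_\infty \cap \mathrm{span}(x_{1:n})$ yields a PSD matrix $\Xi$ such that for all $S \in \mathrm{span}(x_{1:n})$: $\langle S, \Xi S\rangle \leq \|S\|_\infty^2 \leq r\, \langle S, \Xi S\rangle$, and consequently $\mathbb{E}_\varepsilon\|\sum_{t=1}^n \varepsilon_t x_t\|_\infty \leq \sqrt{r}\, \mathbb{E}_\varepsilon \sqrt{\langle S_\varepsilon, \Xi S_\varepsilon\rangle} \leq \sqrt{r}\cdot\sqrt{\sum_{t=1}^n \|x_t\|_\infty^2} \leq \sqrt{rn}$, where $S_\varepsilon = \sum_t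 \varepsilon_t x_t$. -/
open Finset Real Matrix

lemma sum_dot {ι : Type*} [Fintype ι] {d : ℕ} (f : ι → Fin d → ℝ) (v : Fin d → ℝ) :
    (∑ i, f i) ⬝ᵥ v = ∑ i, f i ⬝ᵥ v := by
  simp [dotProduct, Finset.sum_apply, Finset.sum_mul]
  rw [Finset.sum_comm]

lemma dot_sum {ι : Type*} [Fintype ι] {d : ℕ} (f : ι → Fin d → ℝ) (v : Fin d → ℝ) :
    v ⬝ᵥ (∑ i, f i) = ∑ i, v ⬝ᵥ f i := by
  simp [dotProduct, Finset.sum_apply, Finset.mul_sum]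
  rw [Finset.sum_comm]

lemma expand (n d : ℕ) (x : Fin n → Fin d → ℝ) (Ξ : Matrix (Fin d) (Fin d) ℝ) (c : Fin n → ℝ) :
    (∑ t, c t • x t) ⬝ᵥ Ξ.mulVec (∑ t, c t • x t) =
    ∑ s, ∑ u, c s * c u * (x s ⬝ᵥ Ξ.mulVec (x u)) := by
  have hm : Ξ.mulVec (∑ t, c t • x t) = ∑ t, c t • Ξ.mulVec (x t) := by
    rw [← Matrix.mulVecLin_apply, map_sum]
    simp [Matrix.mulVecLin_apply]
  rw [hm]
  simp only [sum_dot, dot_sum, smul_dotProduct, dotProduct_smul, smul_eq_mul, Finset.mul_sum]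
  rw [Finset.sum_comm]
  exact Finset.sum_congr rfl fun s _ => Finset.sum_congr rfl fun u _ => by ring

lemma sgn_orth (n : ℕ) (s t : Fin n) :
    ∑ σ : Fin n → Bool, sgn (σ s) * sgn (σ t) = if s = t then (2:ℝ)^n else 0 := by
  split_ifs with h
  · subst h
    have h1 : ∀ σ : Fin n → Bool, sgn (σ s) * sgn (σ s) = 1 := by
      intro σ; unfold sgn; cases σ s <;> norm_num
    simp only [h1]
    simp [Finset.card_univ]
  · apply Finset.sum_ninvolution (fun σ => Function.update σ t (!σ t))
    · intro σ
      have h1 : Function.update σ t (!σ t) s = σ s := Function.update_of_ne h _ _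
      have h2 : Function.update σ t (!σ t) t = !σ t := Function.update_self _ _ _
      rw [h1, h2]
      have : sgn (!σ t) = -sgn (σ t) := by unfold sgn; cases σ t <;> simp
      rw [this]; ring
    · intro σ _ heq
      have := congrFun heq t
      rw [Function.update_self] at this
      cases σ t <;> simp_all
    · intro σ; exact Finset.mem_univ _
    · intro σ
      funext u
      by_cases hu : u = t
      · subst hu; simp [Function.update_self]
      · simp [Function.update_of_ne hu]

lemma orth_sum (n d : ℕ) (x : Fin n → Fin d → ℝ) (Ξ : Matrix (Fin d) (Fin d) ℝ) :
    ∑ σ : Fin n → Bool, (∑ t, sgn (σ t) • x t) ⬝ᵥ Ξ.mulVec (∑ t, sgn (σ t) • x t)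
      = 2 ^ n * ∑ t, x t ⬝ᵥ Ξ.mulVec (x t) := by
  simp only [expand]
  calc ∑ σ : Fin n → Bool, ∑ s, ∑ u, sgn (σ s) * sgn (σ u) * (x s ⬝ᵥ Ξ.mulVec (x u))
      = ∑ s, ∑ u, ∑ σ : Fin n → Bool, sgn (σ s) * sgn (σ u) * (x s ⬝ᵥ Ξ.mulVec (x u)) := by
        rw [Finset.sum_comm]
        exact Finset.sum_congr rfl fun s _ => Finset.sum_comm
    _ = ∑ s, ∑ u, (if s = u then (2:ℝ)^n else 0) * (x s ⬝ᵥ Ξ.mulVec (x u)) := by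
        refine Finset.sum_congr rfl fun s _ => Finset.sum_congr rfl fun u _ => ?_
        rw [← Finset.sum_mul, sgn_orth]
    _ = ∑ s, 2^n * (x s ⬝ᵥ Ξ.mulVec (x s)) := by
        refine Finset.sum_congr rfl fun s _ => ?_
        simp
    _ = 2 ^ n * ∑ t, x t ⬝ᵥ Ξ.mulVec (x t) := (Finset.mul_sum _ _ _).symm

/-- John's theorem corollary applied to `B_∞ ∩ span(x_{1:n})`: given a PSD
matrix `Ξ` with `⟨S, ΞS⟩ ≤ ‖S‖∞² ≤ r ⟨S, ΞS⟩` on the span (where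
`r = dim span(x_{1:n})`), for points of the unit `ℓ∞` ball one gets
`𝔼_ε ‖∑ εₜ xₜ‖∞ ≤ √r 𝔼_ε √⟨S_ε, Ξ S_ε⟩ ≤ √r √(∑ ‖xₜ‖∞²) ≤ √(rn)`. -/
theorem stmt_15 (d n : ℕ) (x : Fin n → Fin d → ℝ)
    (hx : ∀ t, ‖x t‖ ≤ 1)
    (Ξ : Matrix (Fin d) (Fin d) ℝ) (hΞ : Ξ.PosSemidef)
    (hsand : ∀ S : Fin d → ℝ, S ∈ Submodule.span ℝ (Set.range x) →
      S ⬝ᵥ Ξ.mulVec S ≤ ‖S‖ ^ 2 ∧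
      ‖S‖ ^ 2 ≤ (Module.finrank ℝ (Submodule.span ℝ (Set.range x)) : ℝ) *
        (S ⬝ᵥ Ξ.mulVec S)) :
    (∑ σ : Fin n → Bool, ‖∑ t, sgn (σ t) • x t‖) / 2 ^ n ≤
      Real.sqrt (Module.finrank ℝ (Submodule.span ℝ (Set.range x))) *
        ((∑ σ : Fin n → Bool,
          Real.sqrt ((∑ t, sgn (σ t) • x t) ⬝ᵥ
            Ξ.mulVec (∑ t, sgn (σ t) • x t))) / 2 ^ n) ∧
    Real.sqrt (Module.finrank ℝ (Submodule.span ℝ (Set.range x))) *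
        ((∑ σ : Fin n → Bool,
          Real.sqrt ((∑ t, sgn (σ t) • x t) ⬝ᵥ
            Ξ.mulVec (∑ t, sgn (σ t) • x t))) / 2 ^ n) ≤
      Real.sqrt (Module.finrank ℝ (Submodule.span ℝ (Set.range x))) *
        Real.sqrt (∑ t, ‖x t‖ ^ 2) ∧
    Real.sqrt (Module.finrank ℝ (Submodule.span ℝ (Set.range x))) *
        Real.sqrt (∑ t, ‖x t‖ ^ 2) ≤
      Real.sqrt ((Module.finrank ℝ (Submodule.span ℝ (Set.range x))) * n) := by
  classical
  have hr0 : (0:ℝ) ≤ (Module.finrank ℝ (Submodule.span ℝ (Set.range x)) : ℝ) :=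
    Nat.cast_nonneg _
  have hmem : ∀ σ : Fin n → Bool,
      (∑ t, sgn (σ t) • x t) ∈ Submodule.span ℝ (Set.range x) := fun σ =>
    Submodule.sum_mem _ fun t _ => Submodule.smul_mem _ _ (Submodule.subset_span ⟨t, rfl⟩)
  have hQ0 : ∀ S : Fin d → ℝ, 0 ≤ S ⬝ᵥ Ξ.mulVec S := fun S => by
    have := hΞ.dotProduct_mulVec_nonneg S; simpa using this
  have hpow : (0:ℝ) < 2 ^ n := by positivity
  refine ⟨?_, ?_, ?_⟩
  · rw [← mul_div_assoc]
    gcongr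
    rw [Finset.mul_sum]
    refine Finset.sum_le_sum fun σ _ => ?_
    have h2 := (hsand _ (hmem σ)).2
    rw [show ‖∑ t, sgn (σ t) • x t‖ = Real.sqrt (‖∑ t, sgn (σ t) • x t‖ ^ 2) from
      (Real.sqrt_sq (norm_nonneg _)).symm, ← Real.sqrt_mul hr0]
    exact Real.sqrt_le_sqrt h2
  · refine mul_le_mul_of_nonneg_left ?_ (Real.sqrt_nonneg _)
    rw [div_le_iff₀ hpow]
    have hQsum : ∑ σ : Fin n → Bool,
        (∑ t, sgn (σ t) • x t) ⬝ᵥ Ξ.mulVec (∑ t, sgn (σ t) • x t)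
          ≤ 2 ^ n * ∑ t, ‖x t‖ ^ 2 := by
      rw [orth_sum]
      exact mul_le_mul_of_nonneg_left
        (Finset.sum_le_sum fun t _ =>
          (hsand (x t) (Submodule.subset_span ⟨t, rfl⟩)).1) hpow.le
    have hcs : (∑ σ : Fin n → Bool,
        Real.sqrt ((∑ t, sgn (σ t) • x t) ⬝ᵥ Ξ.mulVec (∑ t, sgn (σ t) • x t))) ^ 2
          ≤ 2 ^ n * ∑ σ : Fin n → Bool,
            (∑ t, sgn (σ t) • x t) ⬝ᵥ Ξ.mulVec (∑ t, sgn (σ t) • x t) := by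
      have hc := sq_sum_le_card_mul_sum_sq (s := (Finset.univ : Finset (Fin n → Bool)))
        (f := fun σ : Fin n → Bool =>
          Real.sqrt ((∑ t, sgn (σ t) • x t) ⬝ᵥ Ξ.mulVec (∑ t, sgn (σ t) • x t)))
      have hcard : (((Finset.univ : Finset (Fin n → Bool)).card) : ℝ) = 2 ^ n := by
        simp [Finset.card_univ]
      rw [hcard] at hc
      refine hc.trans_eq (congrArg _ (Finset.sum_congr rfl fun σ _ => ?_))
      exact Real.sq_sqrt (hQ0 _)
    have hsq : (∑ σ : Fin n → Bool,
        Real.sqrt ((∑ t, sgn (σ t) • x t) ⬝ᵥ Ξ.mulVec (∑ t, sgn (σ t) • x t))) ^ 2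
          ≤ (2 ^ n) ^ 2 * ∑ t, ‖x t‖ ^ 2 := by
      calc _ ≤ 2 ^ n * ∑ σ : Fin n → Bool,
            (∑ t, sgn (σ t) • x t) ⬝ᵥ Ξ.mulVec (∑ t, sgn (σ t) • x t) := hcs
        _ ≤ 2 ^ n * (2 ^ n * ∑ t, ‖x t‖ ^ 2) := mul_le_mul_of_nonneg_left hQsum hpow.le
        _ = (2 ^ n) ^ 2 * ∑ t, ‖x t‖ ^ 2 := by ring
    have hnn : 0 ≤ ∑ σ : Fin n → Bool,
        Real.sqrt ((∑ t, sgn (σ t) • x t) ⬝ᵥ Ξ.mulVec (∑ t, sgn (σ t) • x t)) :=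
      Finset.sum_nonneg fun σ _ => Real.sqrt_nonneg _
    calc (∑ σ : Fin n → Bool,
        Real.sqrt ((∑ t, sgn (σ t) • x t) ⬝ᵥ Ξ.mulVec (∑ t, sgn (σ t) • x t)))
        = Real.sqrt ((∑ σ : Fin n → Bool,
            Real.sqrt ((∑ t, sgn (σ t) • x t) ⬝ᵥ Ξ.mulVec (∑ t, sgn (σ t) • x t))) ^ 2) :=
          (Real.sqrt_sq hnn).symm
      _ ≤ Real.sqrt ((2 ^ n) ^ 2 * ∑ t, ‖x t‖ ^ 2) := Real.sqrt_le_sqrt hsq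
      _ = Real.sqrt (∑ t, ‖x t‖ ^ 2) * 2 ^ n := by
          rw [Real.sqrt_mul (by positivity), Real.sqrt_sq hpow.le]; ring
  · rw [← Real.sqrt_mul hr0]
    apply Real.sqrt_le_sqrt
    refine mul_le_mul_of_nonneg_left ?_ hr0
    calc ∑ t, ‖x t‖ ^ 2 ≤ ∑ _t : Fin n, (1:ℝ) :=
        Finset.sum_le_sum fun t _ => pow_le_one₀ (norm_nonneg _) (hx t)
      _ = n := by simp
end
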